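/- arXiv:2308.11146 — 3 statements merged into one kernel-verified Lean document; each statement's English description precedes it below -/
import Mathlib

section
/- If a finite simple graph G with m edges can be decomposed into α edge-disjoint forests (i.e., its edge set is a union of α forests), then Σ_{uv ∈ E} min(deg(u), deg(v)) ≤ 2·m·α. -/
open SimpleGraph Finset

/-- A finite acyclic graph with an edge has a leaf: a vertex with a unique neighbor. -/
lemma exists_leaf_aux {V : Type*} [Fintype V] [DecidableEq V] {F : SimpleGraph V}
    (hF : F.IsAcyclic) {a b : V} (hab : F.Adj a b) :
    ∃ v w : V, F.Adj v w ∧ ∀ x, F.Adj v x → x = w := by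
  classical
  set S : Set ℕ := {n | ∃ (u v : V) (p : F.Walk u v), p.IsPath ∧ p.length = n} with hS
  have h1S : (1 : ℕ) ∈ S := by
    refine ⟨a, b, SimpleGraph.Walk.cons hab SimpleGraph.Walk.nil, ?_, rfl⟩
    simp [SimpleGraph.Walk.cons_isPath_iff, hab.ne]
  have hne : S.Nonempty := ⟨1, h1S⟩
  have hbdd : BddAbove S := by
    refine ⟨Fintype.card V, ?_⟩
    rintro n ⟨u, v, p, hp, rfl⟩
    exact le_of_lt hp.length_lt
  obtain ⟨u, v, p, hp, hlen⟩ := Nat.sSup_mem hne hbdd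
  have hone : 1 ≤ sSup S := le_csSup hbdd h1S
  have hq : p.reverse.IsPath := hp.reverse
  have hql : p.reverse.length = sSup S := by
    rw [SimpleGraph.Walk.length_reverse]; exact hlen
  generalize p.reverse = q at hq hql
  cases q with
  | nil => simp at hql; omega
  | @cons _ w _ hvw r =>
    rw [SimpleGraph.Walk.cons_isPath_iff] at hq
    obtain ⟨hr, hvr⟩ := hq
    refine ⟨v, w, hvw, ?_⟩
    intro x hvx
    by_contra hxw
    have hxv : x ≠ v := fun h => F.irrefl (h ▸ hvx)
    by_cases hxs : x ∈ r.support
    · -- construct a cycle, contradiction with acyclicity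
      have hd : (r.takeUntil x hxs).IsPath := hr.takeUntil hxs
      have hvd : v ∉ (r.takeUntil x hxs).support :=
        fun h => hvr (SimpleGraph.Walk.support_takeUntil_subset _ hxs h)
      have hpath : (SimpleGraph.Walk.cons hvw (r.takeUntil x hxs)).IsPath := by
        rw [SimpleGraph.Walk.cons_isPath_iff]; exact ⟨hd, hvd⟩
      have hnotedge : s(x, v) ∉ (SimpleGraph.Walk.cons hvw (r.takeUntil x hxs)).edges := by
        intro hmem
        rw [SimpleGraph.Walk.edges_cons, List.mem_cons] at hmem
        rcases hmem with hmem | hmem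
        · rw [Sym2.eq_iff] at hmem
          rcases hmem with ⟨h1, h2⟩ | ⟨h1, h2⟩
          · exact hxv h1
          · exact hxw h1
        · exact hvd ((r.takeUntil x hxs).snd_mem_support_of_mem_edges hmem)
      have hcyc := SimpleGraph.Path.cons_isCycle
        ⟨SimpleGraph.Walk.cons hvw (r.takeUntil x hxs), hpath⟩ hvx.symm hnotedge
      exact hF _ hcyc
    · -- extend the path, contradiction with maximality
      have hpath : (SimpleGraph.Walk.cons hvx.symm (SimpleGraph.Walk.cons hvw r)).IsPath := by
        rw [SimpleGraph.Walk.cons_isPath_iff]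
        refine ⟨by rw [SimpleGraph.Walk.cons_isPath_iff]; exact ⟨hr, hvr⟩, ?_⟩
        rw [SimpleGraph.Walk.support_cons, List.mem_cons]
        rintro (h | h)
        · exact hxv h
        · exact hxs h
      have hmem : (r.length + 2) ∈ S :=
        ⟨x, _, SimpleGraph.Walk.cons hvx.symm (SimpleGraph.Walk.cons hvw r), hpath, by simp⟩
      have := le_csSup hbdd hmem
      simp only [SimpleGraph.Walk.length_cons] at hql
      omega

/-- For a finite acyclic graph, there is an injection from edges to vertices
mapping each edge to one of its endpoints. -/
lemma exists_edge_injection {V : Type*} [Fintype V] [DecidableEq V] :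
    ∀ (n : ℕ) (F : SimpleGraph V), F.edgeSet.ncard = n → F.IsAcyclic →
    ∃ f : Sym2 V → V, (∀ e ∈ F.edgeSet, f e ∈ e) ∧ Set.InjOn f F.edgeSet := by
  intro n
  induction n using Nat.strong_induction_on with
  | _ n ih =>
    intro F hn hF
    classical
    by_cases hE : F.edgeSet = ∅
    · exact ⟨fun e => (Quot.out e).1, by simp [hE], by simp [hE]⟩
    · obtain ⟨e0, he0⟩ := Set.nonempty_iff_ne_empty.mpr hE
      induction e0 using Sym2.ind with
      | _ a b =>
        rw [SimpleGraph.mem_edgeSet] at he0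
        obtain ⟨v, w, hvw, huniq⟩ := exists_leaf_aux hF he0
        -- the only edge of F containing v is s(v,w)
        have hkey : ∀ e ∈ F.edgeSet, e ≠ s(v, w) → v ∉ e := by
          intro e he hne hv
          induction e using Sym2.ind with
          | _ c d =>
            rw [SimpleGraph.mem_edgeSet] at he
            rw [Sym2.mem_iff] at hv
            rcases hv with rfl | rfl
            · exact hne (by rw [huniq d he])
            · exact hne (by rw [huniq c he.symm, Sym2.eq_swap])
        set F' := F.deleteEdges {s(v, w)} with hF'
        have hle : F' ≤ F := F.deleteEdges_le _
        have hacyc' : F'.IsAcyclic := fun x c hc => hF _ (hc.mapLe hle)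
        have hes' : F'.edgeSet = F.edgeSet \ {s(v, w)} := F.edgeSet_deleteEdges _
        have hmemvw : s(v, w) ∈ F.edgeSet := hvw
        have hlt : F'.edgeSet.ncard < n := by
          rw [← hn]
          apply Set.ncard_lt_ncard
          · rw [hes']
            constructor
            · exact Set.diff_subset
            · intro hsub
              exact (hsub hmemvw).2 rfl
          · exact Set.toFinite _
        obtain ⟨f', hf'mem, hf'inj⟩ := ih _ hlt F' rfl hacyc'
        have hf'ne : ∀ e ∈ F'.edgeSet, f' e ≠ v := by
          intro e he heq
          have he2 := hes' ▸ he
          exact hkey e he2.1 he2.2 (heq ▸ hf'mem e he)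
        refine ⟨Function.update f' s(v, w) v, ?_, ?_⟩
        · intro e he
          by_cases h : e = s(v, w)
          · subst h
            rw [Function.update_self]
            exact Sym2.mem_mk_left v w
          · rw [Function.update_of_ne h]
            exact hf'mem e (by rw [hes']; exact ⟨he, h⟩)
        · intro e1 h1 e2 h2 heq
          by_cases he1 : e1 = s(v, w) <;> by_cases he2 : e2 = s(v, w)
          · rw [he1, he2]
          · subst he1
            rw [Function.update_self, Function.update_of_ne he2] at heq
            exact absurd heq.symm (hf'ne e2 (by rw [hes']; exact ⟨h2, he2⟩))
          · subst he2
            rw [Function.update_self, Function.update_of_ne he1] at heq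
            exact absurd heq (hf'ne e1 (by rw [hes']; exact ⟨h1, he1⟩))
          · rw [Function.update_of_ne he1, Function.update_of_ne he2] at heq
            exact hf'inj (by rw [hes']; exact ⟨h1, he1⟩) (by rw [hes']; exact ⟨h2, he2⟩) heq

/-- The edge set of `G` is partitioned into the forests `F i`. -/
def ForestPartition {V : Type*} {k : ℕ} (G : SimpleGraph V)
    (F : Fin k → SimpleGraph V) : Prop :=
  (∀ i, (F i).IsAcyclic) ∧ (∀ i, F i ≤ G) ∧
  (∀ u v, G.Adj u v → ∃ i, (F i).Adj u v) ∧
  (∀ i j, i ≠ j → ∀ u v, (F i).Adj u v → ¬ (F j).Adj u v)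

theorem stmt_5 {V : Type*} [Fintype V] [DecidableEq V] (G : SimpleGraph V)
    [DecidableRel G.Adj] (α : ℕ) (F : Fin α → SimpleGraph V)
    (hF : ForestPartition G F) :
    (∑ e ∈ G.edgeFinset,
        Sym2.lift ⟨fun u v => min (G.degree u) (G.degree v),
          fun u v => min_comm _ _⟩ e) ≤ 2 * G.edgeFinset.card * α := by
  classical
  obtain ⟨hacyc, hle, hcover, hdisj⟩ := hF
  set wt : Sym2 V → ℕ := Sym2.lift ⟨fun u v => min (G.degree u) (G.degree v),
    fun u v => min_comm _ _⟩ with hwt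
  -- G's edge finset is contained in the union of the forests' edge finsets
  have hsub : G.edgeFinset ⊆ Finset.univ.biUnion (fun i => (F i).edgeFinset) := by
    intro e he
    rw [SimpleGraph.mem_edgeFinset] at he
    induction e using Sym2.ind with
    | _ u v =>
      rw [SimpleGraph.mem_edgeSet] at he
      obtain ⟨i, hi⟩ := hcover u v he
      exact Finset.mem_biUnion.mpr ⟨i, Finset.mem_univ i, by
        rw [SimpleGraph.mem_edgeFinset]; exact hi⟩
  -- forests are edge-disjoint
  have hdisj' : ((Finset.univ : Finset (Fin α)) : Set (Fin α)).PairwiseDisjoint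
      (fun i => (F i).edgeFinset) := by
    intro i _ j _ hij
    simp only [Function.onFun]
    rw [Finset.disjoint_left]
    intro e hei hej
    rw [SimpleGraph.mem_edgeFinset] at hei hej
    induction e using Sym2.ind with
    | _ u v =>
      rw [SimpleGraph.mem_edgeSet] at hei hej
      exact hdisj i j hij u v hei hej
  -- per-forest bound
  have hforest : ∀ i : Fin α, ∑ e ∈ (F i).edgeFinset, wt e ≤ 2 * G.edgeFinset.card := by
    intro i
    obtain ⟨f, hfmem, hfinj⟩ := exists_edge_injection ((F i).edgeSet.ncard) (F i) rfl (hacyc i)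
    have step1 : ∑ e ∈ (F i).edgeFinset, wt e ≤ ∑ e ∈ (F i).edgeFinset, G.degree (f e) := by
      apply Finset.sum_le_sum
      intro e he
      rw [SimpleGraph.mem_edgeFinset] at he
      induction e using Sym2.ind with
      | _ u v =>
        have hfe := hfmem _ he
        rw [Sym2.mem_iff] at hfe
        rcases hfe with h | h <;> rw [h] <;> simp [hwt]
    have step2 : ∑ e ∈ (F i).edgeFinset, G.degree (f e)
        = ∑ x ∈ (F i).edgeFinset.image f, G.degree x := by
      rw [Finset.sum_image]
      intro x hx y hy hxy
      exact hfinj (by rwa [← SimpleGraph.mem_edgeFinset]) (by rwa [← SimpleGraph.mem_edgeFinset]) hxy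
    have step3 : ∑ x ∈ (F i).edgeFinset.image f, G.degree x ≤ ∑ x, G.degree x :=
      Finset.sum_le_sum_of_subset (Finset.subset_univ _)
    calc ∑ e ∈ (F i).edgeFinset, wt e ≤ ∑ e ∈ (F i).edgeFinset, G.degree (f e) := step1
      _ = ∑ x ∈ (F i).edgeFinset.image f, G.degree x := step2
      _ ≤ ∑ x, G.degree x := step3
      _ = 2 * G.edgeFinset.card := G.sum_degrees_eq_twice_card_edges
  calc ∑ e ∈ G.edgeFinset, wt e
      ≤ ∑ e ∈ Finset.univ.biUnion (fun i => (F i).edgeFinset), wt e :=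
        Finset.sum_le_sum_of_subset hsub
    _ = ∑ i, ∑ e ∈ (F i).edgeFinset, wt e := Finset.sum_biUnion hdisj'
    _ ≤ ∑ _i : Fin α, 2 * G.edgeFinset.card := Finset.sum_le_sum fun i _ => hforest i
    _ = 2 * G.edgeFinset.card * α := by
        rw [Finset.sum_const, Finset.card_univ, Fintype.card_fin, smul_eq_mul, mul_comm]
end

section
/- If the edge set of a finite simple graph G with m edges can be partitioned into α forests, then the number of triangles in G is at most 2·m·α. -/
open SimpleGraph

noncomputable def fpRoot {V : Type*} (H : SimpleGraph V) (v : V) : V :=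
  (H.connectedComponentMk v).out

noncomputable def fpDepth {V : Type*} (H : SimpleGraph V) (v : V) : ℕ :=
  H.dist v (fpRoot H v)

lemma fpRoot_reachable {V : Type*} (H : SimpleGraph V) (v : V) :
    H.Reachable v (fpRoot H v) := by
  have : H.connectedComponentMk ((H.connectedComponentMk v).out) =
      H.connectedComponentMk v := (H.connectedComponentMk v).out_eq
  exact (ConnectedComponent.exact this).symm

lemma fpRoot_eq_of_adj {V : Type*} {H : SimpleGraph V} {u v : V} (h : H.Adj u v) :
    fpRoot H u = fpRoot H v := by
  unfold fpRoot
  rw [ConnectedComponent.connectedComponentMk_eq_of_adj h]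

lemma fpDepth_le {V : Type*} {H : SimpleGraph V} {u v : V} (huv : H.Adj u v) :
    fpDepth H u ≤ fpDepth H v + 1 := by
  obtain ⟨p, hp⟩ := (fpRoot_reachable H v).exists_walk_length_eq_dist
  have h1 : fpDepth H u = H.dist u (fpRoot H v) := by
    unfold fpDepth; rw [fpRoot_eq_of_adj huv]
  have h2 : fpDepth H v = H.dist v (fpRoot H v) := rfl
  rw [h1, h2, ← hp]
  simpa using dist_le (Walk.cons huv p)

lemma fpDepth_ne {V : Type*} {H : SimpleGraph V} (hH : H.IsAcyclic) {u v : V}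
    (huv : H.Adj u v) : fpDepth H u ≠ fpDepth H v := by
  classical
  intro hEq
  obtain ⟨pu, hpu_path, hpu_len⟩ := (fpRoot_reachable H u).exists_path_of_dist
  obtain ⟨pv, hpv_path, hpv_len⟩ := (fpRoot_reachable H v).exists_path_of_dist
  have hruv : fpRoot H u = fpRoot H v := fpRoot_eq_of_adj huv
  have hunotin : u ∉ pv.support := by
    intro hu
    have hsplit : (pv.takeUntil u hu).length + (pv.dropUntil u hu).length
        = pv.length := by
      conv_rhs => rw [← pv.take_spec hu]
      rw [Walk.length_append]
    have htake_pos : 0 < (pv.takeUntil u hu).length := by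
      rcases Nat.eq_zero_or_pos (pv.takeUntil u hu).length with h | h
      · exact absurd (Walk.eq_of_length_eq_zero h) huv.ne'
      · exact h
    have hdrop : H.dist u (fpRoot H v) ≤ (pv.dropUntil u hu).length := dist_le _
    have hdu : fpDepth H u = H.dist u (fpRoot H v) := by
      unfold fpDepth; rw [hruv]
    have hdv : fpDepth H v = pv.length := hpv_len.symm
    omega
  have hW : (Walk.cons huv pv).IsPath := hpv_path.cons hunotin
  have hpu'_path : (pu.copy rfl hruv).IsPath := by simpa using hpu_path
  have heq := hH.path_unique ⟨pu.copy rfl hruv, hpu'_path⟩ ⟨Walk.cons huv pv, hW⟩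
  have hlen : (pu.copy rfl hruv).length = (Walk.cons huv pv).length := by
    rw [congrArg Walk.length (congrArg Subtype.val heq)]
  simp only [Walk.length_copy, Walk.length_cons] at hlen
  have h1 : fpDepth H u = pu.length := hpu_len.symm
  have h2 : fpDepth H v = pv.length := hpv_len.symm
  omega

lemma fpDepth_step {V : Type*} {H : SimpleGraph V} (hH : H.IsAcyclic) {u v : V}
    (huv : H.Adj u v) :
    fpDepth H u = fpDepth H v + 1 ∨ fpDepth H v = fpDepth H u + 1 := by
  have h1 := fpDepth_le huv
  have h2 := fpDepth_le huv.symm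
  have h3 := fpDepth_ne hH huv
  omega

lemma sym2_exists_mem {V : Type*} (e : Sym2 V) : ∃ x, x ∈ e := by
  induction e using Sym2.ind with
  | _ x y => exact ⟨x, Sym2.mem_mk_left x y⟩

open scoped Classical in
noncomputable def fpTail {V : Type*} (H : SimpleGraph V) (e : Sym2 V) : V :=
  if h : ∃ x ∈ e, ∀ y ∈ e, y ≠ x → fpDepth H y < fpDepth H x then h.choose
  else (sym2_exists_mem e).choose

lemma fpTail_exists {V : Type*} {H : SimpleGraph V} (hH : H.IsAcyclic) {e : Sym2 V}
    (he : e ∈ H.edgeSet) :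
    ∃ x ∈ e, ∀ y ∈ e, y ≠ x → fpDepth H y < fpDepth H x := by
  induction e using Sym2.ind with
  | _ u v =>
    have huv : H.Adj u v := he
    rcases fpDepth_step hH huv with h | h
    · refine ⟨u, Sym2.mem_mk_left u v, ?_⟩
      intro y hy hyne
      rcases Sym2.mem_iff.mp hy with rfl | rfl
      · exact absurd rfl hyne
      · omega
    · refine ⟨v, Sym2.mem_mk_right u v, ?_⟩
      intro y hy hyne
      rcases Sym2.mem_iff.mp hy with rfl | rfl
      · omega
      · exact absurd rfl hyne

lemma fpTail_spec {V : Type*} {H : SimpleGraph V} (hH : H.IsAcyclic) {e : Sym2 V}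
    (he : e ∈ H.edgeSet) :
    fpTail H e ∈ e ∧ ∀ y ∈ e, y ≠ fpTail H e → fpDepth H y < fpDepth H (fpTail H e) := by
  classical
  unfold fpTail
  rw [dif_pos (fpTail_exists hH he)]
  exact ⟨(fpTail_exists hH he).choose_spec.1, (fpTail_exists hH he).choose_spec.2⟩

lemma fpTail_injOn {V : Type*} {H : SimpleGraph V} (hH : H.IsAcyclic) :
    Set.InjOn (fpTail H) H.edgeSet := by
  intro e1 he1 e2 he2 hfe
  obtain ⟨h1mem, h1max⟩ := fpTail_spec hH he1
  obtain ⟨h2mem, h2max⟩ := fpTail_spec hH he2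
  rw [← hfe] at h2mem h2max
  clear hfe
  generalize hx : fpTail H e1 = x at h1mem h1max h2mem h2max
  obtain ⟨a, rfl⟩ := Sym2.mem_iff_exists.mp h1mem
  obtain ⟨b, rfl⟩ := Sym2.mem_iff_exists.mp h2mem
  have hxa : H.Adj x a := he1
  have hxb : H.Adj x b := he2
  have hda : fpDepth H a < fpDepth H x := h1max a (Sym2.mem_mk_right x a) hxa.ne'
  have hdb : fpDepth H b < fpDepth H x := h2max b (Sym2.mem_mk_right x b) hxb.ne'
  have hda' : fpDepth H x = fpDepth H a + 1 := by
    rcases fpDepth_step hH hxa with h | h <;> omega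
  have hdb' : fpDepth H x = fpDepth H b + 1 := by
    rcases fpDepth_step hH hxb with h | h <;> omega
  by_cases hab : a = b
  · rw [hab]
  · exfalso
    obtain ⟨pa, hpa⟩ := (fpRoot_reachable H a).exists_walk_length_eq_dist
    obtain ⟨pb, hpb⟩ := (fpRoot_reachable H b).exists_walk_length_eq_dist
    have hra : fpRoot H a = fpRoot H x := (fpRoot_eq_of_adj hxa).symm
    have hrb : fpRoot H b = fpRoot H x := (fpRoot_eq_of_adj hxb).symm
    have hW1len : (Walk.cons hxa (pa.copy rfl hra)).length = H.dist x (fpRoot H x) := by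
      simp only [Walk.length_cons, Walk.length_copy, hpa]
      have : H.dist a (fpRoot H a) = fpDepth H a := rfl
      have : H.dist x (fpRoot H x) = fpDepth H x := rfl
      omega
    have hW2len : (Walk.cons hxb (pb.copy rfl hrb)).length = H.dist x (fpRoot H x) := by
      simp only [Walk.length_cons, Walk.length_copy, hpb]
      have : H.dist b (fpRoot H b) = fpDepth H b := rfl
      have : H.dist x (fpRoot H x) = fpDepth H x := rfl
      omega
    have hW1path := (Walk.cons hxa (pa.copy rfl hra)).isPath_of_length_eq_dist hW1len
    have hW2path := (Walk.cons hxb (pb.copy rfl hrb)).isPath_of_length_eq_dist hW2len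
    have heq := hH.path_unique ⟨_, hW1path⟩ ⟨_, hW2path⟩
    have hval : Walk.cons hxa (pa.copy rfl hra) = Walk.cons hxb (pb.copy rfl hrb) :=
      congrArg Subtype.val heq
    have hgv : (Walk.cons hxa (pa.copy rfl hra)).getVert 1
        = (Walk.cons hxb (pb.copy rfl hrb)).getVert 1 := by rw [hval]
    rw [Walk.getVert_cons_succ, Walk.getVert_cons_succ, Walk.getVert_zero,
      Walk.getVert_zero] at hgv
    exact hab hgv

theorem stmt_6 {V : Type*} [Fintype V] [DecidableEq V] (G : SimpleGraph V)
    [DecidableRel G.Adj] (α : ℕ) (F : Fin α → SimpleGraph V)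
    (hF : ForestPartition G F) :
    (G.cliqueFinset 3).card ≤ 2 * G.edgeFinset.card * α := by
  classical
  obtain ⟨hacyc, hle, hcover, -⟩ := hF
  -- every edge of G lies in some forest
  have hex2 : ∀ e ∈ G.edgeSet, ∃ i, e ∈ (F i).edgeSet := by
    intro e he
    induction e using Sym2.ind with
    | _ u v =>
      obtain ⟨i, hi⟩ := hcover u v he
      exact ⟨i, hi⟩
  -- dispose of the case of no triangles
  rcases Finset.eq_empty_or_nonempty (G.cliqueFinset 3) with hT | ⟨t0, ht0⟩
  · simp [hT]
  -- there is a vertex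
  have ht0' := (SimpleGraph.mem_cliqueFinset_iff.mp ht0).2
  have hVne : Nonempty V := by
    rcases Finset.card_pos.mp (by rw [ht0']; norm_num) with ⟨v, -⟩
    exact ⟨v⟩
  obtain ⟨v0⟩ := hVne
  -- there is an edge, so α > 0
  have hα : 0 < α := by
    obtain ⟨a, b, c, hab, -, -, rfl⟩ := Finset.card_eq_three.mp ht0'
    have hadjab : G.Adj a b := (SimpleGraph.mem_cliqueFinset_iff.mp ht0).1
      (by simp) (by simp) hab
    obtain ⟨i, -⟩ := hcover a b hadjab
    exact i.pos
  have : Nonempty (Fin α) := ⟨⟨0, hα⟩⟩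
  -- index of an edge, tail of an edge
  set ix : Sym2 V → Fin α := fun e =>
    if h : ∃ i, e ∈ (F i).edgeSet then h.choose else Classical.arbitrary _ with hixdef
  have hix : ∀ e ∈ G.edgeSet, e ∈ (F (ix e)).edgeSet := by
    intro e he
    have h := hex2 e he
    simp only [hixdef]
    rw [dif_pos h]
    exact h.choose_spec
  set tl : Sym2 V → V := fun e => fpTail (F (ix e)) e with htldef
  have htl_mem : ∀ e ∈ G.edgeSet, tl e ∈ e := by
    intro e he
    exact (fpTail_spec (hacyc (ix e)) (hix e he)).1
  -- each vertex is the tail of at most α edges of G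
  have hvert : ∀ u : V, (G.edgeFinset.filter (fun e => tl e = u)).card ≤ α := by
    intro u
    have hinj' : Set.InjOn ix (G.edgeFinset.filter (fun e => tl e = u)) := by
      intro e1 h1 e2 h2 hie
      simp only [Finset.coe_filter, Set.mem_setOf_eq, SimpleGraph.mem_edgeFinset] at h1 h2
      have he1 : e1 ∈ (F (ix e1)).edgeSet := hix e1 h1.1
      have he2 : e2 ∈ (F (ix e2)).edgeSet := hix e2 h2.1
      rw [hie] at he1
      have : fpTail (F (ix e2)) e1 = fpTail (F (ix e2)) e2 := by
        have t1 : tl e1 = fpTail (F (ix e1)) e1 := rfl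
        have t2 : tl e2 = fpTail (F (ix e2)) e2 := rfl
        rw [t1, hie] at h1
        rw [t2] at h2
        rw [h1.2, h2.2]
      exact fpTail_injOn (hacyc (ix e2)) he1 he2 this
    calc (G.edgeFinset.filter (fun e => tl e = u)).card
        ≤ (Finset.univ : Finset (Fin α)).card :=
          Finset.card_le_card_of_injOn ix (fun e _ => Finset.mem_univ _) hinj'
      _ = α := by simp
  -- the counting set
  set S : Finset (Sym2 V × Sym2 V) :=
    (G.edgeFinset ×ˢ G.edgeFinset).filter (fun p => tl p.2 ∈ p.1) with hSdef
  -- each triangle gives an element of S recording its vertex set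
  have key : ∀ t ∈ G.cliqueFinset 3, ∃ p : Sym2 V × Sym2 V, p ∈ S ∧
      ∀ z : V, z ∈ t ↔ (z ∈ p.1 ∨ z ∈ p.2) := by
    intro t ht
    obtain ⟨hclique, hcard⟩ := SimpleGraph.mem_cliqueFinset_iff.mp ht
    obtain ⟨a, b, c, hab, hac, hbc, rfl⟩ := Finset.card_eq_three.mp hcard
    have hadjab : G.Adj a b := hclique (by simp) (by simp) hab
    have hadjac : G.Adj a c := hclique (by simp) (by simp) hac
    have hadjbc : G.Adj b c := hclique (by simp) (by simp) hbc
    have hu := htl_mem s(a,b) hadjab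
    rcases Sym2.mem_iff.mp hu with hu' | hu'
    · refine ⟨(s(a,c), s(a,b)), ?_, ?_⟩
      · simp only [hSdef, Finset.mem_filter, Finset.mem_product,
          SimpleGraph.mem_edgeFinset]
        exact ⟨⟨hadjac, hadjab⟩, by rw [hu']; simp⟩
      · intro z
        simp only [Finset.mem_insert, Finset.mem_singleton, Sym2.mem_iff]
        tauto
    · refine ⟨(s(b,c), s(a,b)), ?_, ?_⟩
      · simp only [hSdef, Finset.mem_filter, Finset.mem_product,
          SimpleGraph.mem_edgeFinset]
        exact ⟨⟨hadjbc, hadjab⟩, by rw [hu']; simp⟩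
      · intro z
        simp only [Finset.mem_insert, Finset.mem_singleton, Sym2.mem_iff]
        tauto
  -- injection from triangles into S
  have hinj : (G.cliqueFinset 3).card ≤ S.card := by
    have : Nonempty (Sym2 V × Sym2 V) := ⟨(s(v0, v0), s(v0, v0))⟩
    set Φ : Finset V → Sym2 V × Sym2 V := fun t =>
      if h : ∃ p : Sym2 V × Sym2 V, p ∈ S ∧ ∀ z : V, z ∈ t ↔ (z ∈ p.1 ∨ z ∈ p.2)
      then h.choose else Classical.arbitrary _ with hΦdef
    have hΦspec : ∀ t ∈ G.cliqueFinset 3, Φ t ∈ S ∧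
        ∀ z : V, z ∈ t ↔ (z ∈ (Φ t).1 ∨ z ∈ (Φ t).2) := by
      intro t ht
      have h := key t ht
      simp only [hΦdef]
      rw [dif_pos h]
      exact h.choose_spec
    refine Finset.card_le_card_of_injOn Φ (fun t ht => (hΦspec t ht).1) ?_
    intro t1 h1 t2 h2 hft
    simp only [Finset.mem_coe] at h1 h2
    ext z
    rw [(hΦspec t1 h1).2 z, (hΦspec t2 h2).2 z, hft]
  -- count S
  have hcount : S.card ≤ G.edgeFinset.card * (2 * α) := by
    rw [hSdef]
    have hfiber : ∀ e : Sym2 V,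
        (G.edgeFinset.filter (fun e' => tl e' ∈ e)).card ≤ 2 * α := by
      intro e
      induction e using Sym2.ind with
      | _ x y =>
        have hsub : G.edgeFinset.filter (fun e' => tl e' ∈ s(x,y)) ⊆
            G.edgeFinset.filter (fun e' => tl e' = x) ∪
            G.edgeFinset.filter (fun e' => tl e' = y) := by
          intro e' he'
          simp only [Finset.mem_filter, Sym2.mem_iff, Finset.mem_union] at he' ⊢
          tauto
        calc (G.edgeFinset.filter (fun e' => tl e' ∈ s(x,y))).card
            ≤ _ := Finset.card_le_card hsub
          _ ≤ (G.edgeFinset.filter (fun e' => tl e' = x)).card +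
              (G.edgeFinset.filter (fun e' => tl e' = y)).card :=
            Finset.card_union_le _ _
          _ ≤ 2 * α := by have := hvert x; have := hvert y; omega
    calc ((G.edgeFinset ×ˢ G.edgeFinset).filter (fun p => tl p.2 ∈ p.1)).card
        = ∑ e ∈ G.edgeFinset,
          (((G.edgeFinset ×ˢ G.edgeFinset).filter (fun p => tl p.2 ∈ p.1)).filter
            (fun p => p.1 = e)).card := by
          apply Finset.card_eq_sum_card_fiberwise
          intro p hp
          simp only [Finset.mem_coe, Finset.mem_filter, Finset.mem_product] at hp
          exact hp.1.1
      _ ≤ ∑ e ∈ G.edgeFinset, 2 * α := by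
          apply Finset.sum_le_sum
          intro e he
          refine le_trans (Finset.card_le_card_of_injOn Prod.snd ?_ ?_) (hfiber e)
          · intro p hp
            simp only [Finset.mem_coe, Finset.mem_filter, Finset.mem_product] at hp ⊢
            refine ⟨hp.1.1.2, ?_⟩
            rw [← hp.2]
            exact hp.1.2
          · intro p1 h1 p2 h2 hsnd
            simp only [Finset.mem_coe, Finset.mem_filter] at h1 h2
            exact Prod.ext (h1.2.trans h2.2.symm) hsnd
      _ = G.edgeFinset.card * (2 * α) := by rw [Finset.sum_const, smul_eq_mul]
  calc (G.cliqueFinset 3).card ≤ S.card := hinj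
    _ ≤ G.edgeFinset.card * (2 * α) := hcount
    _ = 2 * G.edgeFinset.card * α := by ring
end

section
/- Fix ℓ ≥ 2. If the edge set of a finite simple graph G with m edges can be partitioned into α forests, then the number of copies of K_ℓ in G is at most C_ℓ · α^{ℓ−2} · m for a constant C_ℓ depending only on ℓ (e.g., C_ℓ = 2^{ℓ-2} works). -/
open Finset SimpleGraph

namespace Stmt15Aux

open scoped Classical

variable {W : Type*}

lemma edgeFinset_card_eq {H : SimpleGraph W} (i1 i2 : Fintype H.edgeSet) :
    (@SimpleGraph.edgeFinset W H i1).card = (@SimpleGraph.edgeFinset W H i2).card := by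
  rw [Subsingleton.elim i1 i2]

lemma acyclic_sup_edge {H : SimpleGraph W} (hH : H.IsAcyclic) {u v : W} (huv : u ≠ v)
    (hr : ¬ H.Reachable u v) : (H ⊔ SimpleGraph.fromEdgeSet {s(u,v)}).IsAcyclic := by
  intro a c hc
  by_cases he : s(u,v) ∈ c.edges
  · have hadj : (H ⊔ SimpleGraph.fromEdgeSet {s(u,v)}).Adj u v := by
      simp [huv]
    have hre := (SimpleGraph.adj_and_reachable_delete_edges_iff_exists_cycle.mpr
      ⟨a, c, hc, he⟩).2
    exact hr (hre.mono (fun x y hxy => by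
      simp only [SimpleGraph.deleteEdges_adj, SimpleGraph.sdiff_adj, SimpleGraph.sup_adj,
        SimpleGraph.fromEdgeSet_adj, Set.mem_singleton_iff] at hxy
      tauto))
  · have hsub : ∀ e ∈ c.edges, e ∈ H.edgeSet := by
      intro e hec
      have := c.edges_subset_edgeSet hec
      rw [SimpleGraph.edgeSet_sup] at this
      rcases this with h1 | h2
      · exact h1
      · exfalso
        rw [SimpleGraph.edgeSet_fromEdgeSet] at h2
        have : e = s(u,v) := by
          rcases h2 with ⟨h2, -⟩
          simpa using h2
        exact he (this ▸ hec)
    exact hH (c.transfer H hsub) (hc.transfer hsub)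

lemma step [Fintype W] [Nonempty W] {H : SimpleGraph W} (hH : H.IsAcyclic)
    (hc : ¬ H.Connected) :
    ∃ H' : SimpleGraph W, H ≤ H' ∧ H'.IsAcyclic ∧
      H'.edgeFinset.card = H.edgeFinset.card + 1 := by
  have hp : ¬ H.Preconnected := fun h => hc ⟨h⟩
  simp only [SimpleGraph.Preconnected] at hp
  push_neg at hp
  obtain ⟨u, v, hr⟩ := hp
  have huv : u ≠ v := fun h => hr (h ▸ SimpleGraph.Reachable.refl u)
  refine ⟨H ⊔ SimpleGraph.fromEdgeSet {s(u,v)}, le_sup_left, acyclic_sup_edge hH huv hr, ?_⟩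
  have hne : s(u,v) ∉ H.edgeFinset := by
    simp only [SimpleGraph.mem_edgeFinset, SimpleGraph.mem_edgeSet]
    exact fun h => hr h.reachable
  have : (H ⊔ SimpleGraph.fromEdgeSet {s(u,v)}).edgeFinset = insert s(u,v) H.edgeFinset := by
    ext e
    simp only [SimpleGraph.mem_edgeFinset, SimpleGraph.edgeSet_sup, Set.mem_union,
      SimpleGraph.edgeSet_fromEdgeSet, Finset.mem_insert, Set.mem_diff, Set.mem_singleton_iff,
      Set.mem_setOf_eq]
    constructor
    · rintro (h | ⟨h, -⟩)
      · exact Or.inr h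
      · exact Or.inl h
    · rintro (rfl | h)
      · exact Or.inr ⟨rfl, by simp [Sym2.isDiag_iff_proj_eq, huv]⟩
      · exact Or.inl h
  have h2 := congrArg Finset.card this
  rw [Finset.card_insert_of_notMem hne] at h2
  exact (edgeFinset_card_eq _ _).trans h2

lemma exists_tree_ge_aux [Fintype W] [Nonempty W] :
    ∀ (n : ℕ) (H : SimpleGraph W), H.IsAcyclic →
      (Fintype.card W).choose 2 - H.edgeFinset.card ≤ n →
      ∃ T : SimpleGraph W, H ≤ T ∧ T.IsTree := by
  intro n
  induction n with
  | zero =>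
    intro H hH hm
    by_cases hc : H.Connected
    · exact ⟨H, le_refl _, ⟨hc, hH⟩⟩
    · obtain ⟨H', hle, hac, hcard⟩ := step hH hc
      have h2 := H'.card_edgeFinset_le_card_choose_two
      omega
  | succ n ih =>
    intro H hH hm
    by_cases hc : H.Connected
    · exact ⟨H, le_refl _, ⟨hc, hH⟩⟩
    · obtain ⟨H', hle, hac, hcard⟩ := step hH hc
      have h2 := H'.card_edgeFinset_le_card_choose_two
      obtain ⟨T, hT1, hT2⟩ := ih H' hac (by omega)
      exact ⟨T, le_trans hle hT1, hT2⟩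

lemma acyclic_card_edgeFinset_le [Fintype W] (H : SimpleGraph W) (hH : H.IsAcyclic) :
    H.edgeFinset.card ≤ Fintype.card W - 1 := by
  cases isEmpty_or_nonempty W with
  | inl h =>
    have : H.edgeFinset = ∅ := by
      ext e
      refine e.ind (fun x y => ?_)
      exact (h.false x).elim
    simp [this]
  | inr h =>
    obtain ⟨T, hle, hT⟩ := exists_tree_ge_aux ((Fintype.card W).choose 2) H hH (by omega)
    have h1 : H.edgeFinset ⊆ T.edgeFinset := SimpleGraph.edgeFinset_mono hle
    have h2 := hT.card_edgeFinset
    have := Finset.card_le_card h1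
    omega


section Part2

variable {V : Type*} [Fintype V] [DecidableEq V]

noncomputable def edgesIn (G : SimpleGraph V) (s : Finset V) : Finset (Sym2 V) :=
  G.edgeFinset.filter (fun e => ∀ x ∈ e, x ∈ s)

noncomputable def degIn (G : SimpleGraph V) (s : Finset V) (v : V) : ℕ :=
  (s.filter (fun u => G.Adj v u)).card

lemma mem_edgesIn {G : SimpleGraph V} {s : Finset V} {e : Sym2 V} :
    e ∈ edgesIn G s ↔ e ∈ G.edgeSet ∧ ∀ x ∈ e, x ∈ s := by
  simp [edgesIn]

/-- The number of edges of `H` inside `s` equals the edge count of the induced graph. -/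
lemma edgesIn_card_comap (H : SimpleGraph V) (s : Finset V) :
    ((SimpleGraph.comap (Subtype.val : {x // x ∈ s} → V) H).edgeFinset).card
      = (edgesIn H s).card := by
  apply Finset.card_bij (fun e _ => Sym2.map Subtype.val e)
  · intro e he
    induction e with
    | _ a b =>
      rw [SimpleGraph.mem_edgeFinset, SimpleGraph.mem_edgeSet] at he
      rw [Sym2.map_pair_eq, mem_edgesIn]
      refine ⟨he, ?_⟩
      intro x hx
      rcases Sym2.mem_iff.mp hx with rfl | rfl
      · exact a.2
      · exact b.2
  · intro e1 h1 e2 h2 h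
    exact Sym2.map.injective Subtype.val_injective h
  · intro e he
    rw [mem_edgesIn] at he
    obtain ⟨he1, he2⟩ := he
    induction e with
    | _ a b =>
      have ha : a ∈ s := he2 a (Sym2.mem_mk_left a b)
      have hb : b ∈ s := he2 b (Sym2.mem_mk_right a b)
      refine ⟨s(⟨a, ha⟩, ⟨b, hb⟩), ?_, ?_⟩
      · rw [SimpleGraph.mem_edgeFinset, SimpleGraph.mem_edgeSet]
        exact he1
      · rw [Sym2.map_pair_eq]

lemma handshake (G : SimpleGraph V) (s : Finset V) :
    ∑ v ∈ s, degIn G s v = 2 * (edgesIn G s).card := by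
  set H := SimpleGraph.comap (Subtype.val : {x // x ∈ s} → V) G with hH
  have hdeg : ∀ a : {x // x ∈ s}, H.degree a = degIn G s ↑a := by
    intro a
    rw [← SimpleGraph.card_neighborFinset_eq_degree, degIn]
    refine Finset.card_bij (fun (b : {x // x ∈ s}) _ => (b : V)) ?_ ?_ ?_
    · intro b hb
      rw [SimpleGraph.mem_neighborFinset] at hb
      exact Finset.mem_filter.mpr ⟨b.2, hb⟩
    · intro b1 h1 b2 h2 h
      exact Subtype.val_injective h
    · intro u hu
      rw [Finset.mem_filter] at hu
      exact ⟨⟨u, hu.1⟩, SimpleGraph.mem_neighborFinset _ _ _ |>.mpr hu.2, rfl⟩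
  have h := SimpleGraph.sum_degrees_eq_twice_card_edges H
  rw [edgesIn_card_comap G s] at h
  rw [← h]
  rw [Finset.univ_eq_attach]
  rw [← Finset.sum_attach s (fun v => degIn G s v)]
  exact Finset.sum_congr rfl (fun a _ => (hdeg a).symm)

lemma acyclic_edgesIn_card_le {H : SimpleGraph V} (hH : H.IsAcyclic) (s : Finset V) :
    (edgesIn H s).card ≤ s.card - 1 := by
  rw [← edgesIn_card_comap H s]
  have hac : (SimpleGraph.comap (Subtype.val : {x // x ∈ s} → V) H).IsAcyclic := by
    intro a c hc
    have hemb := SimpleGraph.Embedding.comap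
      (Function.Embedding.subtype (fun x => x ∈ s)) H
    exact hH (c.map hemb.toHom) (hc.map (Function.Embedding.injective _))
  have := acyclic_card_edgeFinset_le _ hac
  rwa [Fintype.card_coe] at this

lemma edgesIn_partition_card_le {V : Type*} [Fintype V] [DecidableEq V]
    (G : SimpleGraph V) {α : ℕ} (F : Fin α → SimpleGraph V)
    (hF : ForestPartition G F) (s : Finset V) :
    (edgesIn G s).card ≤ α * (s.card - 1) := by
  obtain ⟨hac, hle, hcov, hdisj⟩ := hF
  have hsplit : edgesIn G s = Finset.univ.biUnion (fun i => edgesIn (F i) s) := by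
    ext e
    rw [Finset.mem_biUnion, mem_edgesIn]
    constructor
    · rintro ⟨he, hmem⟩
      induction e with
      | _ a b =>
        obtain ⟨i, hi⟩ := hcov a b ((SimpleGraph.mem_edgeSet _).mp he)
        exact ⟨i, Finset.mem_univ i, mem_edgesIn.mpr ⟨(SimpleGraph.mem_edgeSet _).mpr hi, hmem⟩⟩
    · rintro ⟨i, -, hi⟩
      rw [mem_edgesIn] at hi
      exact ⟨SimpleGraph.edgeSet_mono (hle i) hi.1, hi.2⟩
  rw [hsplit, Finset.card_biUnion]
  · calc ∑ i, (edgesIn (F i) s).card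
        ≤ ∑ _i : Fin α, (s.card - 1) :=
          Finset.sum_le_sum (fun i _ => acyclic_edgesIn_card_le (hac i) s)
      _ = α * (s.card - 1) := by simp [Finset.sum_const, mul_comm]
  · intro i _ j _ hij
    show Disjoint (edgesIn (F i) s) (edgesIn (F j) s)
    rw [Finset.disjoint_left]
    intro e hei hej
    rw [mem_edgesIn] at hei hej
    induction e with
    | _ a b =>
      exact hdisj i j hij a b ((SimpleGraph.mem_edgeSet _).mp hei.1)
        ((SimpleGraph.mem_edgeSet _).mp hej.1)

lemma edgesIn_erase (G : SimpleGraph V) (s : Finset V) {v : V} (hv : v ∈ s) :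
    (edgesIn G s).card = (edgesIn G (s.erase v)).card + degIn G s v := by
  have h1 : edgesIn G s = edgesIn G (s.erase v) ∪ (edgesIn G s).filter (fun e => v ∈ e) := by
    ext e
    rw [Finset.mem_union, Finset.mem_filter, mem_edgesIn, mem_edgesIn]
    constructor
    · rintro ⟨he, hmem⟩
      by_cases hve : v ∈ e
      · exact Or.inr ⟨⟨he, hmem⟩, hve⟩
      · exact Or.inl ⟨he, fun x hx =>
          Finset.mem_erase.mpr ⟨fun h => hve (h ▸ hx), hmem x hx⟩⟩
    · rintro (⟨he, hmem⟩ | ⟨⟨he, hmem⟩, -⟩)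
      · exact ⟨he, fun x hx => Finset.mem_of_mem_erase (hmem x hx)⟩
      · exact ⟨he, hmem⟩
  have hdisj : Disjoint (edgesIn G (s.erase v)) ((edgesIn G s).filter (fun e => v ∈ e)) := by
    rw [Finset.disjoint_left]
    intro e he1 he2
    rw [mem_edgesIn] at he1
    rw [Finset.mem_filter] at he2
    exact (Finset.notMem_erase v s) (he1.2 v he2.2)
  have h2 : ((edgesIn G s).filter (fun e => v ∈ e)).card = degIn G s v := by
    symm
    apply Finset.card_bij (fun u _ => s(v, u))
    · intro u hu
      rw [Finset.mem_filter] at hu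
      rw [Finset.mem_filter, mem_edgesIn]
      refine ⟨⟨(SimpleGraph.mem_edgeSet _).mpr hu.2, ?_⟩, Sym2.mem_mk_left v u⟩
      intro x hx
      rcases Sym2.mem_iff.mp hx with rfl | rfl
      · exact hv
      · exact hu.1
    · intro u1 h1' u2 h2' h
      rw [Finset.mem_filter] at h1' h2'
      rcases Sym2.eq_iff.mp h with ⟨-, h4⟩ | ⟨h3, h4⟩
      · exact h4
      · exact h4.trans h3
    · intro e he
      rw [Finset.mem_filter, mem_edgesIn] at he
      obtain ⟨⟨he1, he2⟩, hve⟩ := he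
      obtain ⟨u, rfl⟩ := Sym2.mem_iff_exists.mp hve
      refine ⟨u, ?_, rfl⟩
      rw [Finset.mem_filter]
      exact ⟨he2 u (Sym2.mem_mk_right v u), (SimpleGraph.mem_edgeSet _).mp he1⟩
  calc (edgesIn G s).card
      = (edgesIn G (s.erase v) ∪ (edgesIn G s).filter (fun e => v ∈ e)).card := by
        conv_lhs => rw [h1]
    _ = (edgesIn G (s.erase v)).card + ((edgesIn G s).filter (fun e => v ∈ e)).card :=
        Finset.card_union_of_disjoint hdisj
    _ = (edgesIn G (s.erase v)).card + degIn G s v := by rw [h2]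

lemma exists_small_deg (G : SimpleGraph V) {α : ℕ} (F : Fin α → SimpleGraph V)
    (hF : ForestPartition G F) {s : Finset V} (hs : s.Nonempty) :
    ∃ v ∈ s, degIn G s v ≤ 2 * α - 1 := by
  by_contra hcon
  push_neg at hcon
  have hlb : s.card * (2 * α - 1 + 1) ≤ ∑ v ∈ s, degIn G s v := by
    calc s.card * (2 * α - 1 + 1) = s.card • (2 * α - 1 + 1) := by rw [smul_eq_mul]
      _ ≤ ∑ v ∈ s, degIn G s v :=
        Finset.card_nsmul_le_sum s _ _ (fun v hv => hcon v hv)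
  rw [handshake G s] at hlb
  have hub := edgesIn_partition_card_le G F hF s
  obtain ⟨k, hk⟩ : ∃ k, s.card = k + 1 := ⟨s.card - 1, by
    have := Finset.card_pos.mpr hs; omega⟩
  rw [hk] at hlb hub
  simp only [Nat.add_sub_cancel] at hub
  rcases Nat.eq_zero_or_pos α with rfl | hα
  · have h0 : 2 * 0 - 1 + 1 = 1 := rfl
    rw [h0, mul_one] at hlb
    rw [Nat.zero_mul] at hub
    omega
  · obtain ⟨a, rfl⟩ : ∃ a, α = a + 1 := ⟨α - 1, by omega⟩
    have h1 : 2 * (a + 1) - 1 + 1 = 2 * (a + 1) := by omega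
    rw [h1] at hlb
    have h2 : (k + 1) * (2 * (a + 1)) = 2 * ((a + 1) * k) + 2 * (a + 1) := by ring
    rw [h2] at hlb
    omega

noncomputable def cliquesIn (G : SimpleGraph V) (ℓ : ℕ) (s : Finset V) :
    Finset (Finset V) :=
  (G.cliqueFinset ℓ).filter (fun t => t ⊆ s)

lemma mem_cliquesIn {G : SimpleGraph V} {ℓ : ℕ} {s : Finset V} {t : Finset V} :
    t ∈ cliquesIn G ℓ s ↔ G.IsNClique ℓ t ∧ t ⊆ s := by
  simp [cliquesIn, SimpleGraph.mem_cliqueFinset_iff]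

lemma cliquesIn_erase (G : SimpleGraph V) {ℓ : ℕ} (hℓ : 2 ≤ ℓ) (s : Finset V)
    {v : V} (hv : v ∈ s) :
    (cliquesIn G ℓ s).card ≤
      (cliquesIn G ℓ (s.erase v)).card + (degIn G s v).choose (ℓ - 1) := by
  have h1 : cliquesIn G ℓ s ⊆
      cliquesIn G ℓ (s.erase v) ∪ (cliquesIn G ℓ s).filter (fun t => v ∈ t) := by
    intro t ht
    rw [Finset.mem_union, Finset.mem_filter]
    rw [mem_cliquesIn] at ht
    by_cases hvt : v ∈ t
    · exact Or.inr ⟨mem_cliquesIn.mpr ht, hvt⟩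
    · refine Or.inl (mem_cliquesIn.mpr ⟨ht.1, fun x hx => ?_⟩)
      exact Finset.mem_erase.mpr ⟨fun h => hvt (h ▸ hx), ht.2 hx⟩
  have h2 : ((cliquesIn G ℓ s).filter (fun t => v ∈ t)).card ≤
      (degIn G s v).choose (ℓ - 1) := by
    have hmap : ∀ t ∈ (cliquesIn G ℓ s).filter (fun t => v ∈ t),
        t.erase v ∈ Finset.powersetCard (ℓ - 1) (s.filter (fun u => G.Adj v u)) := by
      intro t ht
      rw [Finset.mem_filter, mem_cliquesIn] at ht
      obtain ⟨⟨hcl, hsub⟩, hvt⟩ := ht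
      rw [Finset.mem_powersetCard]
      constructor
      · intro u hu
        rw [Finset.mem_erase] at hu
        rw [Finset.mem_filter]
        exact ⟨hsub hu.2, hcl.1 hvt hu.2 (fun h => hu.1 h.symm)⟩
      · rw [Finset.card_erase_of_mem hvt, hcl.2]
    have hinj : ∀ t1 ∈ (cliquesIn G ℓ s).filter (fun t => v ∈ t),
        ∀ t2 ∈ (cliquesIn G ℓ s).filter (fun t => v ∈ t),
        t1.erase v = t2.erase v → t1 = t2 := by
      intro t1 h1' t2 h2' h
      rw [Finset.mem_filter] at h1' h2'
      rw [← Finset.insert_erase h1'.2, ← Finset.insert_erase h2'.2, h]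
    calc ((cliquesIn G ℓ s).filter (fun t => v ∈ t)).card
        ≤ (Finset.powersetCard (ℓ - 1) (s.filter (fun u => G.Adj v u))).card :=
          Finset.card_le_card_of_injOn _ hmap (fun t1 h1' t2 h2' => hinj t1 h1' t2 h2')
      _ = (degIn G s v).choose (ℓ - 1) := by
          rw [Finset.card_powersetCard, degIn]
  calc (cliquesIn G ℓ s).card
      ≤ (cliquesIn G ℓ (s.erase v) ∪ (cliquesIn G ℓ s).filter (fun t => v ∈ t)).card :=
        Finset.card_le_card h1
    _ ≤ (cliquesIn G ℓ (s.erase v)).card +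
          ((cliquesIn G ℓ s).filter (fun t => v ∈ t)).card := Finset.card_union_le _ _
    _ ≤ (cliquesIn G ℓ (s.erase v)).card + (degIn G s v).choose (ℓ - 1) := by omega

lemma choose_bound {d α ℓ : ℕ} (hℓ : 2 ≤ ℓ) (hd : d ≤ 2 * α - 1) :
    d.choose (ℓ - 1) ≤ d * (2 * α) ^ (ℓ - 2) := by
  rcases Nat.eq_zero_or_pos d with rfl | hdpos
  · rw [Nat.choose_eq_zero_of_lt (by omega)]
    exact Nat.zero_le _
  · calc d.choose (ℓ - 1) ≤ d ^ (ℓ - 1) := Nat.choose_le_pow d (ℓ - 1)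
      _ = d * d ^ (ℓ - 2) := by
          rw [← pow_succ']
          congr 1
          omega
      _ ≤ d * (2 * α) ^ (ℓ - 2) :=
          Nat.mul_le_mul_left d (Nat.pow_le_pow_left (by omega) _)

lemma main_induction (G : SimpleGraph V) {ℓ : ℕ} (hℓ : 2 ≤ ℓ) {α : ℕ}
    (F : Fin α → SimpleGraph V) (hF : ForestPartition G F) (s : Finset V) :
    (cliquesIn G ℓ s).card ≤ (2 * α) ^ (ℓ - 2) * (edgesIn G s).card := by
  induction s using Finset.strongInductionOn with
  | _ s ih =>
    rcases s.eq_empty_or_nonempty with rfl | hs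
    · have : cliquesIn G ℓ ∅ = ∅ := by
        rw [Finset.eq_empty_iff_forall_notMem]
        intro t ht
        rw [mem_cliquesIn] at ht
        have h1 := Finset.subset_empty.mp ht.2
        have h2 := ht.1.2
        rw [h1] at h2
        simp at h2
        omega
      simp [this]
    · obtain ⟨v, hv, hd⟩ := exists_small_deg G F hF hs
      calc (cliquesIn G ℓ s).card
          ≤ (cliquesIn G ℓ (s.erase v)).card + (degIn G s v).choose (ℓ - 1) :=
            cliquesIn_erase G hℓ s hv
        _ ≤ (2 * α) ^ (ℓ - 2) * (edgesIn G (s.erase v)).card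
              + degIn G s v * (2 * α) ^ (ℓ - 2) :=
            Nat.add_le_add (ih (s.erase v) (Finset.erase_ssubset hv)) (choose_bound hℓ hd)
        _ = (2 * α) ^ (ℓ - 2) * ((edgesIn G (s.erase v)).card + degIn G s v) := by ring
        _ = (2 * α) ^ (ℓ - 2) * (edgesIn G s).card := by rw [← edgesIn_erase G s hv]

end Part2

end Stmt15Aux

theorem stmt_15 {V : Type*} [Fintype V] [DecidableEq V] (G : SimpleGraph V)
    [DecidableRel G.Adj] (ℓ : ℕ) (hℓ : 2 ≤ ℓ) (α : ℕ)
    (F : Fin α → SimpleGraph V) (hF : ForestPartition G F) :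
    (G.cliqueFinset ℓ).card ≤ 2 ^ (ℓ - 2) * α ^ (ℓ - 2) * G.edgeFinset.card := by
  have h := Stmt15Aux.main_induction G hℓ F hF Finset.univ
  have e1 : G.cliqueFinset ℓ = Stmt15Aux.cliquesIn G ℓ Finset.univ := by
    ext t
    rw [Stmt15Aux.mem_cliquesIn, SimpleGraph.mem_cliqueFinset_iff]
    exact ⟨fun ht => ⟨ht, Finset.subset_univ t⟩, fun ht => ht.1⟩
  have e2 : Stmt15Aux.edgesIn G Finset.univ = G.edgeFinset := by
    ext e
    rw [Stmt15Aux.mem_edgesIn, SimpleGraph.mem_edgeFinset]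
    exact ⟨fun he => he.1, fun he => ⟨he, fun x _ => Finset.mem_univ x⟩⟩
  rw [e1]
  calc (Stmt15Aux.cliquesIn G ℓ Finset.univ).card
      ≤ (2 * α) ^ (ℓ - 2) * (Stmt15Aux.edgesIn G Finset.univ).card := h
    _ = 2 ^ (ℓ - 2) * α ^ (ℓ - 2) * (Stmt15Aux.edgesIn G Finset.univ).card := by
        rw [mul_pow]
    _ = 2 ^ (ℓ - 2) * α ^ (ℓ - 2) * G.edgeFinset.card := by rw [e2]
end
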